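/- Let 𝒩 and 𝒬 be nontrivial varieties of groups and 𝒱 = 𝒩𝒬. Let G ∈ 𝒱, H a subgroup of G, N = 𝒬(G) the verbal subgroup of G associated to 𝒬, and D = dom_N^𝒩(N ∩ H), regarded as a subgroup of G. Let D' be a subgroup of N such that D ⊆ D', dom_N^𝒩(D') = D', H·D' = D'·H, and N_G(D')·N = G. Then ⟨H, D⟩ ⊆ dom_G^{𝒩𝒬}(H) ⊆ HD'. -/

import Mathlib

/-- A bundled group: a type in universe `u` together with a group structure. -/
structure GroupT : Type (u + 1) where
  carrier : Type u
  [str : Group carrier]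

attribute [instance] GroupT.str

/-- A variety of groups: a class of groups closed under isomorphism, subgroups,
homomorphic images, and arbitrary direct products indexed by types in the universe. -/
structure GroupVariety : Type (u + 1) where
  Mem : GroupT.{u} → Prop
  iso_closed : ∀ {G H : GroupT.{u}}, G.carrier ≃* H.carrier → Mem G → Mem H
  subgroup_closed : ∀ (G : GroupT.{u}) (H : Subgroup G.carrier), Mem G → Mem ⟨H⟩
  quotient_closed : ∀ (G H : GroupT.{u}) (f : G.carrier →* H.carrier),
      Function.Surjective f → Mem G → Mem H
  pi_closed : ∀ (ι : Type u) (f : ι → GroupT.{u}),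
      (∀ i, Mem (f i)) → Mem ⟨∀ i, (f i).carrier⟩

/-- A variety is nontrivial if it contains some nontrivial group and
does not contain all groups. -/
def GroupVariety.IsNontrivial (V : GroupVariety.{u}) : Prop :=
  (∃ G : GroupT.{u}, V.Mem G ∧ Nontrivial G.carrier) ∧ ∃ G : GroupT.{u}, ¬ V.Mem G

/-- The dominion of a subgroup `H` of `G` relative to a class `C` of groups:
all elements of `G` on which any two homomorphisms into a `C`-group agreeing on `H`
must agree. -/
def dominion (C : GroupT.{u} → Prop) (G : Type u) [Group G] (H : Subgroup G) : Set G :=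
  {a | ∀ K : GroupT.{u}, C K → ∀ f g : G →* K.carrier, (∀ h ∈ H, f h = g h) → f a = g a}

/-- The product variety `𝒩𝒬`: the class of groups having a normal subgroup in `𝒩`
with quotient in `𝒬`. -/
def ProductVariety (N Q : GroupVariety.{u}) (G : GroupT.{u}) : Prop :=
  ∃ (M : Subgroup G.carrier) (h : M.Normal),
    N.Mem ⟨M⟩ ∧ (letI := h; Q.Mem ⟨G.carrier ⧸ M⟩)

/-- The verbal subgroup `𝒬(G)`: the intersection of all normal subgroups of `G`
whose quotient lies in `𝒬`. -/
def verbalSubgroup (Q : GroupVariety.{u}) (G : Type u) [Group G] : Subgroup G :=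
  ⨅ M ∈ {M : Subgroup G | ∃ h : M.Normal, (letI := h; Q.Mem ⟨G ⧸ M⟩)}, M

open scoped Pointwise

/-! ### Auxiliary definitions and lemmas -/

/-- Action of `Q` on functions `X → A` by precomposition with the inverse action. -/
def arrAct (Q X A : Type*) [Group Q] [MulAction Q X] [Group A] : Q →* MulAut (X → A) where
  toFun q :=
    { toFun := fun b x => b (q⁻¹ • x)
      invFun := fun b x => b (q • x)
      left_inv := fun b => by funext x; simp
      right_inv := fun b => by funext x; simp
      map_mul' := fun b c => rfl }
  map_one' := by ext b x; simp
  map_mul' := fun q q' => by ext b x; simp [mul_smul]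

lemma arrAct_apply {Q X A : Type*} [Group Q] [MulAction Q X] [Group A]
    (q : Q) (b : X → A) (x : X) : arrAct Q X A q b x = b (q⁻¹ • x) := rfl

/-- The dominion as a subgroup. -/
def dominionSubgroup (C : GroupT.{u} → Prop) (G : Type u) [Group G] (H : Subgroup G) :
    Subgroup G where
  carrier := dominion C G H
  one_mem' := fun _ _ _ _ _ => by simp
  mul_mem' := fun {a b} ha hb K hK f g hfg => by
    rw [map_mul, map_mul, ha K hK f g hfg, hb K hK f g hfg]
  inv_mem' := fun {a} ha K hK f g hfg => by
    rw [map_inv, map_inv, ha K hK f g hfg]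

lemma le_dominionSubgroup (C : GroupT.{u} → Prop) (G : Type u) [Group G] (H : Subgroup G) :
    H ≤ dominionSubgroup C G H := fun h hh _ _ f g hfg => hfg h hh

/-- Membership of the semidirect product in the product variety. -/
lemma sdprod_mem (𝒩 𝒬 : GroupVariety.{u}) (Q X A : Type u) [Group Q] [MulAction Q X] [Group A]
    (hA : 𝒩.Mem ⟨X → A⟩) (hQ : 𝒬.Mem ⟨Q⟩) :
    ProductVariety 𝒩 𝒬 ⟨(X → A) ⋊[arrAct Q X A] Q⟩ := by
  refine ⟨(SemidirectProduct.rightHom : _ →* Q).ker, inferInstance, ?_, ?_⟩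
  · have e : (X → A) ≃* (SemidirectProduct.rightHom : (X → A) ⋊[arrAct Q X A] Q →* Q).ker :=
      (MonoidHom.ofInjective SemidirectProduct.inl_injective).trans
        (MulEquiv.subgroupCongr SemidirectProduct.range_inl_eq_ker_rightHom)
    exact 𝒩.iso_closed e hA
  · have hs : Function.Surjective (SemidirectProduct.rightHom : (X → A) ⋊[arrAct Q X A] Q →* Q) :=
      SemidirectProduct.rightHom_surjective
    have e := QuotientGroup.quotientKerEquivOfSurjective _ hs
    exact 𝒬.quotient_closed ⟨Q⟩ _ e.symm.toMonoidHom e.symm.surjective hQ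

lemma mem_verbal_iff (Q : GroupVariety.{u}) (G : Type u) [Group G] (x : G) :
    x ∈ verbalSubgroup Q G ↔ ∀ M : Subgroup G,
      (∃ h : M.Normal, (letI := h; Q.Mem ⟨G ⧸ M⟩)) → x ∈ M := by
  simp [verbalSubgroup, Subgroup.mem_iInf]

lemma verbal_normal (Q : GroupVariety.{u}) (G : Type u) [Group G] :
    (verbalSubgroup Q G).Normal := by
  constructor
  intro n hn g
  rw [mem_verbal_iff] at hn ⊢
  intro M hM
  exact hM.choose.conj_mem n (hn M hM) g

lemma verbal_le_ker (Q : GroupVariety.{u}) (G : Type u) [Group G]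
    (K : Type u) [Group K] (M : Subgroup K) (hM : M.Normal)
    (hQ : letI := hM; Q.Mem ⟨K ⧸ M⟩) (f : G →* K) :
    ∀ x ∈ verbalSubgroup Q G, f x ∈ M := by
  letI := hM
  intro x hx
  set F : G →* K ⧸ M := (QuotientGroup.mk' M).comp f with hF
  have hker : x ∈ F.ker := by
    rw [mem_verbal_iff] at hx
    refine hx F.ker ⟨inferInstance, ?_⟩
    have e := QuotientGroup.quotientKerEquivRange F
    exact Q.iso_closed e.symm (Q.subgroup_closed ⟨K ⧸ M⟩ F.range hQ)
  simpa [hF, QuotientGroup.eq_one_iff] using hker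

/-- The verbal quotient lies in the variety. -/
lemma verbal_quotient_mem (Q : GroupVariety.{u}) (G : Type u) [Group G] :
    letI := verbal_normal Q G; Q.Mem ⟨G ⧸ verbalSubgroup Q G⟩ := by
  letI := verbal_normal Q G
  set S := {M : Subgroup G | ∃ h : M.Normal, (letI := h; Q.Mem ⟨G ⧸ M⟩)} with hS
  haveI inst : ∀ M : S, (M : Subgroup G).Normal := fun M => M.2.choose
  set Φ : G →* ∀ M : S, G ⧸ (M : Subgroup G) :=
    MonoidHom.mk' (fun g M => QuotientGroup.mk g) (fun a b => by funext M; rfl) with hΦ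
  have hker : Φ.ker = verbalSubgroup Q G := by
    ext x
    rw [MonoidHom.mem_ker, mem_verbal_iff]
    constructor
    · intro h M hM
      have := congrFun h ⟨M, hM⟩
      simpa [hΦ, QuotientGroup.eq_one_iff] using this
    · intro h
      funext M
      simpa [hΦ, QuotientGroup.eq_one_iff] using h M M.2
  have hpi : Q.Mem ⟨∀ M : S, G ⧸ (M : Subgroup G)⟩ :=
    Q.pi_closed S (fun M => ⟨G ⧸ (M : Subgroup G)⟩) (fun M => M.2.choose_spec)
  have h2 : Q.Mem ⟨G ⧸ Φ.ker⟩ :=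
    Q.iso_closed (QuotientGroup.quotientKerEquivRange Φ).symm (Q.subgroup_closed _ _ hpi)
  exact Q.iso_closed (QuotientGroup.quotientMulEquivOfEq hker) h2

/-- If `a` is in the `𝒩𝒬`-dominion of `H` in `G` and `G ⧸ N ∈ 𝒬`,
then the image of `a` in `G ⧸ N` lies in the image of `H`. -/
lemma dom_proj_mem (𝒩 𝒬 : GroupVariety.{u}) (h𝒩 : 𝒩.IsNontrivial)
    (G : Type u) [Group G] (H : Subgroup G) (N : Subgroup G) [hNn : N.Normal]
    (hQbar : 𝒬.Mem ⟨G ⧸ N⟩) (a : G) (ha : a ∈ dominion (ProductVariety 𝒩 𝒬) G H) :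
    QuotientGroup.mk' N a ∈ H.map (QuotientGroup.mk' N) := by
  classical
  obtain ⟨⟨A, hA, hAnt⟩, -⟩ := h𝒩
  obtain ⟨a0, ha0⟩ := exists_ne (1 : A.carrier)
  set Hbar := H.map (QuotientGroup.mk' N) with hHbar
  set X := (G ⧸ N) ⧸ Hbar with hX
  have hAX : 𝒩.Mem ⟨X → A.carrier⟩ := 𝒩.pi_closed X (fun _ => A) (fun _ => hA)
  set ρ := arrAct (G ⧸ N) X A.carrier with hρ
  have hK : ProductVariety 𝒩 𝒬 ⟨(X → A.carrier) ⋊[ρ] (G ⧸ N)⟩ :=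
    sdprod_mem 𝒩 𝒬 (G ⧸ N) X A.carrier hAX hQbar
  set γ0 : X → A.carrier := fun y => if y = ((1 : G ⧸ N) : X) then a0 else 1 with hγ0
  set f : G →* (X → A.carrier) ⋊[ρ] (G ⧸ N) :=
    SemidirectProduct.inr.comp (QuotientGroup.mk' N) with hf
  set c : (X → A.carrier) ⋊[ρ] (G ⧸ N) := SemidirectProduct.inl γ0 with hc
  set g : G →* (X → A.carrier) ⋊[ρ] (G ⧸ N) := (MulAut.conj c).toMonoidHom.comp f with hg
  -- indicator invariance
  have hsmul1 : ∀ q : G ⧸ N, q ∈ Hbar → ∀ y : X, (q • y = ((1 : G ⧸ N) : X)) ↔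
      y = ((1 : G ⧸ N) : X) := by
    intro q hq y
    obtain ⟨z, rfl⟩ := QuotientGroup.mk_surjective y
    have h1 : q • ((z : X)) = ((q * z : G ⧸ N) : X) := by
      rw [← smul_eq_mul]
      exact MulAction.Quotient.smul_mk Hbar q z
    rw [h1, QuotientGroup.eq, QuotientGroup.eq, mul_one, mul_one, mul_inv_rev]
    exact mul_mem_cancel_right (inv_mem hq)
  -- invariance of the indicator function under Hbar
  have hinv : ∀ q : G ⧸ N, q ∈ Hbar → ρ q γ0 = γ0 := by
    intro q hq
    funext y
    show (if q⁻¹ • y = ((1 : G ⧸ N) : X) then a0 else 1)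
        = (if y = ((1 : G ⧸ N) : X) then a0 else 1)
    simp only [hsmul1 q⁻¹ (inv_mem hq) y]
  have hcomm : ∀ q : G ⧸ N, q ∈ Hbar → SemidirectProduct.inr q * c = c * SemidirectProduct.inr q := by
    intro q hq
    have h1 : (SemidirectProduct.inl (ρ q γ0) : (X → A.carrier) ⋊[ρ] (G ⧸ N))
        = SemidirectProduct.inr q * c * SemidirectProduct.inr q⁻¹ :=
      SemidirectProduct.inl_aut q γ0
    rw [hinv q hq] at h1
    rw [← hc] at h1
    calc SemidirectProduct.inr q * c
        = (SemidirectProduct.inr q * c * SemidirectProduct.inr q⁻¹) * SemidirectProduct.inr q := by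
          rw [map_inv]; group
      _ = c * SemidirectProduct.inr q := by rw [← h1]
  have hfg : ∀ h ∈ H, f h = g h := by
    intro h hh
    have hq : QuotientGroup.mk' N h ∈ Hbar := Subgroup.mem_map.mpr ⟨h, hh, rfl⟩
    have hfh : f h = SemidirectProduct.inr (QuotientGroup.mk' N h) := rfl
    have hgh : g h = c * f h * c⁻¹ := rfl
    rw [hgh, hfh, ← hcomm _ hq]
    group
  have hfa := ha ⟨(X → A.carrier) ⋊[ρ] (G ⧸ N)⟩ hK f g hfg
  -- extract invariance at the point mk a
  have hga : g a = c * f a * c⁻¹ := rfl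
  have hfa' : SemidirectProduct.inr (QuotientGroup.mk' N a) * c
      = c * SemidirectProduct.inr (QuotientGroup.mk' N a) := by
    have : f a = c * f a * c⁻¹ := by rw [← hga]; exact hfa
    have h2 : f a * c = c * f a := by
      calc f a * c = (c * f a * c⁻¹) * c := by rw [← this]
        _ = c * f a := by group
    exact h2
  set q : G ⧸ N := QuotientGroup.mk' N a with hqdef
  have h3 : SemidirectProduct.inl (ρ q γ0) = (SemidirectProduct.inl γ0 :
      (X → A.carrier) ⋊[ρ] (G ⧸ N)) := by
    rw [SemidirectProduct.inl_aut q γ0, ← hc, map_inv]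
    calc SemidirectProduct.inr q * c * (SemidirectProduct.inr q)⁻¹
        = c * SemidirectProduct.inr q * (SemidirectProduct.inr q)⁻¹ := by rw [hfa']
      _ = c := by group
  have h4 : ρ q γ0 = γ0 := SemidirectProduct.inl_injective h3
  have h5 := congrFun h4 ((q : G ⧸ N) : X)
  have h6 : (if (q⁻¹ • ((q : G ⧸ N) : X) : X) = ((1 : G ⧸ N) : X) then a0 else 1)
      = (if ((q : G ⧸ N) : X) = ((1 : G ⧸ N) : X) then a0 else 1) := h5
  have h7 : q⁻¹ • ((q : G ⧸ N) : X) = ((1 : G ⧸ N) : X) := by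
    rw [MulAction.Quotient.smul_mk Hbar q⁻¹ q, smul_eq_mul, inv_mul_cancel]
  rw [if_pos h7] at h6
  have h8 : ((q : G ⧸ N) : X) = ((1 : G ⧸ N) : X) := by
    by_contra hcon
    rw [if_neg hcon] at h6
    exact ha0 h6
  have h9 : q⁻¹ * 1 ∈ Hbar := QuotientGroup.eq.mp h8
  have h10 : q ∈ Hbar := by
    have := inv_mem h9
    simpa using this
  exact h10


theorem stmt6 (𝒩 𝒬 : GroupVariety.{u}) (h𝒩 : 𝒩.IsNontrivial) (h𝒬 : 𝒬.IsNontrivial)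
    (G : Type u) [Group G] (hG : ProductVariety 𝒩 𝒬 ⟨G⟩) (H : Subgroup G)
    (N : Subgroup G) (hN : N = verbalSubgroup 𝒬 G)
    (D : Set G) (hD : D = Subtype.val '' dominion 𝒩.Mem (↥N) (H.subgroupOf N))
    (D' : Subgroup G) (hD'N : D' ≤ N) (hDD' : D ⊆ (D' : Set G))
    (hD'closed : dominion 𝒩.Mem (↥N) (D'.subgroupOf N) = ((D'.subgroupOf N : Subgroup ↥N) : Set ↥N))
    (hcomm : (H : Set G) * (D' : Set G) = (D' : Set G) * (H : Set G))
    (hnorm : (Subgroup.normalizer (D' : Set G) : Set G) * (N : Set G) = Set.univ) :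
    (Subgroup.closure ((H : Set G) ∪ D) : Set G) ⊆ dominion (ProductVariety 𝒩 𝒬) G H ∧
      dominion (ProductVariety 𝒩 𝒬) G H ⊆ (H : Set G) * (D' : Set G) := by
  classical
  haveI hNn : N.Normal := by rw [hN]; exact verbal_normal 𝒬 G
  have hQbar : 𝒬.Mem ⟨G ⧸ N⟩ := by
    haveI := verbal_normal 𝒬 G
    have h1 := verbal_quotient_mem 𝒬 G
    exact 𝒬.iso_closed (QuotientGroup.quotientMulEquivOfEq hN.symm) h1
  constructor
  · -- first inclusion
    have h1 : Subgroup.closure ((H : Set G) ∪ D) ≤ dominionSubgroup (ProductVariety 𝒩 𝒬) G H := by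
      rw [Subgroup.closure_le]
      rintro a (haH | haD)
      · exact le_dominionSubgroup _ _ _ haH
      · rw [hD] at haD
        obtain ⟨n, hn, rfl⟩ := haD
        intro K hK f g hfg
        obtain ⟨M, hMn, hMN, hMQ⟩ := hK
        have hfM : ∀ x ∈ N, f x ∈ M := by
          rw [hN]; exact verbal_le_ker 𝒬 G K.carrier M hMn hMQ f
        have hgM : ∀ x ∈ N, g x ∈ M := by
          rw [hN]; exact verbal_le_ker 𝒬 G K.carrier M hMn hMQ g
        set f' : ↥N →* ↥M := (f.comp N.subtype).codRestrict M (fun x => hfM x x.2) with hf'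
        set g' : ↥N →* ↥M := (g.comp N.subtype).codRestrict M (fun x => hgM x x.2) with hg'
        have hagree : ∀ d ∈ H.subgroupOf N, f' d = g' d := fun d hd =>
          Subtype.ext (hfg d (Subgroup.mem_subgroupOf.mp hd))
        exact congrArg Subtype.val (hn ⟨↥M⟩ hMN f' g' hagree)
    exact fun a haC => h1 haC
  · -- second inclusion
    intro a ha
    -- image of a lies in the image of H
    have hproj := dom_proj_mem 𝒩 𝒬 h𝒩 G H N hQbar a ha
    obtain ⟨h0, hh0, hπh0⟩ := Subgroup.mem_map.mp hproj
    -- H ∩ N ⊆ D'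
    have hHND' : ∀ v : G, v ∈ H → v ∈ N → v ∈ D' := by
      intro v hvH hvN
      apply hDD'
      rw [hD]
      refine ⟨⟨v, hvN⟩, ?_, rfl⟩
      exact fun K hK f g hfg => hfg ⟨v, hvN⟩ (Subgroup.mem_subgroupOf.mpr hvH)
    -- a separating pair of maps on N with equalizer exactly D'
    have hsep : ∀ i : {n : ↥N // n ∉ D'.subgroupOf N}, ∃ KK : GroupT.{u}, 𝒩.Mem KK ∧
        ∃ ff gg : ↥N →* KK.carrier,
          (∀ d ∈ D'.subgroupOf N, ff d = gg d) ∧ ff i.1 ≠ gg i.1 := by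
      intro i
      have hni : (i.1 : ↥N) ∉ dominion 𝒩.Mem (↥N) (D'.subgroupOf N) := by
        rw [hD'closed]; exact i.2
      simp only [dominion, Set.mem_setOf_eq] at hni
      push_neg at hni
      exact hni
    choose KK hKK ff gg hffgg hne using hsep
    set Acar := ∀ i : {n : ↥N // n ∉ D'.subgroupOf N}, (KK i).carrier with hAcar
    have hA : 𝒩.Mem ⟨Acar⟩ := 𝒩.pi_closed _ KK hKK
    set φ : ↥N →* Acar := MonoidHom.mk' (fun n i => ff i n)
      (fun n m => by funext i; exact map_mul (ff i) n m) with hφ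
    set ψ : ↥N →* Acar := MonoidHom.mk' (fun n i => gg i n)
      (fun n m => by funext i; exact map_mul (gg i) n m) with hψ
    have heq : ∀ n : ↥N, φ n = ψ n ↔ n ∈ D'.subgroupOf N := by
      intro n
      constructor
      · intro h
        by_contra hn
        exact hne ⟨n, hn⟩ (congrFun h ⟨n, hn⟩)
      · intro h
        funext i
        exact hffgg i n h
    -- a transversal of N in G adapted to H and the normalizer of D'
    set π : G →* G ⧸ N := QuotientGroup.mk' N with hπdef
    set Hbar : Subgroup (G ⧸ N) := H.map π with hHbar
    set cos : (G ⧸ N) → Set (G ⧸ N) := fun x => {y | y * x⁻¹ ∈ Hbar} with hcos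
    set pick : Set (G ⧸ N) → (G ⧸ N) := fun S =>
      if (1 : G ⧸ N) ∈ S then 1 else if h : S.Nonempty then h.choose else 1 with hpick
    set rep : (G ⧸ N) → (G ⧸ N) := fun x => pick (cos x) with hrep
    have hrep_mem : ∀ x, rep x * x⁻¹ ∈ Hbar := by
      intro x
      by_cases h1 : (1 : G ⧸ N) ∈ cos x
      · have : rep x = 1 := by rw [hrep, hpick]; simp only [if_pos h1]
        rw [this]
        simpa [hcos] using h1
      · have hne2 : (cos x).Nonempty := ⟨x, by simp only [hcos, Set.mem_setOf_eq, mul_inv_cancel]; exact one_mem _⟩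
        have : rep x = hne2.choose := by
          rw [hrep, hpick]; simp only [if_neg h1, dif_pos hne2]
        have hmem := hne2.choose_spec
        rw [this]
        simpa [hcos] using hmem
    have hcos_eq : ∀ x y, x * y⁻¹ ∈ Hbar → cos x = cos y := by
      intro x y hxy
      ext z
      simp only [hcos, Set.mem_setOf_eq]
      constructor
      · intro h
        have := mul_mem h hxy
        simpa [mul_assoc] using this
      · intro h
        have hyx : y * x⁻¹ ∈ Hbar := by
          have := inv_mem hxy
          simpa using this
        have := mul_mem h hyx
        simpa [mul_assoc] using this
    have hrep_coset : ∀ x y, x * y⁻¹ ∈ Hbar → rep x = rep y := by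
      intro x y h
      rw [hrep]
      simp only [hcos_eq x y h]
    have hrep_H : ∀ x ∈ Hbar, rep x = 1 := by
      intro x hx
      have h1 : (1 : G ⧸ N) ∈ cos x := by
        simp only [hcos, Set.mem_setOf_eq, one_mul]
        exact inv_mem hx
      rw [hrep, hpick]; simp only [if_pos h1]
    -- lift of cosets into the normalizer of D'
    have hw_ex : ∀ z : G ⧸ N, ∃ g0 : G, g0 ∈ Subgroup.normalizer (D' : Set G) ∧ π g0 = z := by
      intro z
      obtain ⟨x, rfl⟩ := QuotientGroup.mk'_surjective N z
      have hx : x ∈ (Subgroup.normalizer (D' : Set G) : Set G) * (N : Set G) := by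
        rw [hnorm]; trivial
      rw [Set.mem_mul] at hx
      obtain ⟨t0, ht0, n0, hn0, hmul⟩ := hx
      refine ⟨t0, ht0, ?_⟩
      have hn1 : π n0 = 1 := (QuotientGroup.eq_one_iff n0).mpr hn0
      rw [← hmul, map_mul, hn1, mul_one]
    set w : (G ⧸ N) → G := fun z => if z = 1 then 1 else (hw_ex z).choose with hw
    have hw_norm : ∀ z, w z ∈ Subgroup.normalizer (D' : Set G) := by
      intro z
      by_cases h : z = 1
      · rw [hw]; simp only [if_pos h]; exact one_mem _
      · rw [hw]; simp only [if_neg h]; exact (hw_ex z).choose_spec.1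
    have hw_π : ∀ z, π (w z) = z := by
      intro z
      by_cases h : z = 1
      · rw [hw]; simp only [if_pos h, map_one]; exact h.symm
      · rw [hw]; simp only [if_neg h]; exact (hw_ex z).choose_spec.2
    have hw_one : w 1 = 1 := by rw [hw]; simp
    -- lift of Hbar into H
    have hs_ex : ∀ z, z ∈ Hbar → ∃ h1 : G, h1 ∈ H ∧ π h1 = z := by
      intro z hz
      obtain ⟨x, hx, hπx⟩ := Subgroup.mem_map.mp hz
      exact ⟨x, hx, hπx⟩
    set s : (G ⧸ N) → G := fun z =>
      if hz : z ∈ Hbar then (if z = 1 then 1 else (hs_ex z hz).choose) else 1 with hs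
    have hs_H : ∀ z (hz : z ∈ Hbar), s z ∈ H ∧ π (s z) = z := by
      intro z hz
      rw [hs]
      simp only [dif_pos hz]
      by_cases h1 : z = 1
      · simp only [if_pos h1]
        exact ⟨one_mem H, by rw [map_one, h1]⟩
      · simp only [if_neg h1]
        exact ⟨(hs_ex z hz).choose_spec.1, (hs_ex z hz).choose_spec.2⟩
    have hs_one : s 1 = 1 := by
      rw [hs]; simp only [dif_pos (one_mem Hbar)]; simp
    -- the transversal
    set t : (G ⧸ N) → G := fun x => s (x * (rep x)⁻¹) * w (rep x) with ht
    have hxrep : ∀ x, x * (rep x)⁻¹ ∈ Hbar := by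
      intro x
      have := inv_mem (hrep_mem x)
      simpa using this
    have ht_π : ∀ x, π (t x) = x := by
      intro x
      rw [ht]
      simp only [map_mul, (hs_H _ (hxrep x)).2, hw_π]
      simp
    have ht_one : t 1 = 1 := by
      have h1 : rep 1 = 1 := hrep_H 1 (one_mem _)
      rw [ht]
      simp only [h1, hw_one, inv_one, mul_one, hs_one]
    have ht_H : ∀ z, z ∈ Hbar → t z ∈ H := by
      intro z hz
      have h1 : rep z = 1 := hrep_H z hz
      rw [ht]
      simp only [h1, hw_one, inv_one, mul_one]
      exact (hs_H _ (by simpa using hz)).1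
    -- the key property: twisting by elements of H stays in D'
    have ht_key : ∀ h ∈ H, ∀ x : G ⧸ N, (t x)⁻¹ * h * t ((π h)⁻¹ * x) ∈ D' := by
      intro h hh x
      have hq : π h ∈ Hbar := Subgroup.mem_map.mpr ⟨h, hh, rfl⟩
      have hrepeq : rep ((π h)⁻¹ * x) = rep x := by
        apply hrep_coset
        have : (π h)⁻¹ * x * x⁻¹ = (π h)⁻¹ := by group
        rw [this]
        exact inv_mem hq
      have hz1 : x * (rep x)⁻¹ ∈ Hbar := hxrep x
      have hz2 : (π h)⁻¹ * x * (rep x)⁻¹ ∈ Hbar := by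
        have := hxrep ((π h)⁻¹ * x)
        rwa [hrepeq] at this
      set v : G := (s (x * (rep x)⁻¹))⁻¹ * h * s ((π h)⁻¹ * x * (rep x)⁻¹) with hv
      have hvH : v ∈ H := mul_mem (mul_mem (inv_mem (hs_H _ hz1).1) hh) (hs_H _ hz2).1
      have hvN : v ∈ N := by
        have hπv : π v = 1 := by
          rw [hv]
          simp only [map_mul, map_inv, (hs_H _ hz1).2, (hs_H _ hz2).2]
          group
        have : QuotientGroup.mk v = (1 : G ⧸ N) := hπv
        exact (QuotientGroup.eq_one_iff v).mp this
      have hvD' : v ∈ D' := hHND' v hvH hvN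
      have hconj : (w (rep x))⁻¹ * v * (w (rep x))⁻¹⁻¹ ∈ D' := by
        have hwn : (w (rep x))⁻¹ ∈ Subgroup.normalizer (D' : Set G) := inv_mem (hw_norm (rep x))
        rw [Subgroup.mem_normalizer_iff] at hwn
        exact (hwn v).mp hvD'
      have hexpr : (t x)⁻¹ * h * t ((π h)⁻¹ * x)
          = (w (rep x))⁻¹ * v * (w (rep x))⁻¹⁻¹ := by
        simp only [ht, hv]
        rw [hrepeq]
        group
      rw [hexpr]
      exact hconj
    -- the cocycle
    set γ : G → (G ⧸ N) → G := fun g0 x => (t x)⁻¹ * g0 * t ((π g0)⁻¹ * x) with hγ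
    have hγN : ∀ g0 x, γ g0 x ∈ N := by
      intro g0 x
      have hπγ : π (γ g0 x) = 1 := by
        rw [hγ]
        simp only [map_mul, map_inv, ht_π]
        group
      exact (QuotientGroup.eq_one_iff _).mp hπγ
    set γ' : G → (G ⧸ N) → ↥N := fun g0 x => ⟨γ g0 x, hγN g0 x⟩ with hγ'
    have hγcoc : ∀ g1 g2 x, γ (g1 * g2) x = γ g1 x * γ g2 ((π g1)⁻¹ * x) := by
      intro g1 g2 x
      have harg : (π (g1 * g2))⁻¹ * x = (π g2)⁻¹ * ((π g1)⁻¹ * x) := by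
        rw [map_mul]; group
      simp only [hγ]
      rw [harg]
      group
    -- the wreath-like semidirect product and the two homomorphisms
    set ρ2 := arrAct (G ⧸ N) (G ⧸ N) Acar with hρ2
    have hAX2 : 𝒩.Mem ⟨(G ⧸ N) → Acar⟩ := 𝒩.pi_closed (G ⧸ N) (fun _ => ⟨Acar⟩) (fun _ => hA)
    have hK2 : ProductVariety 𝒩 𝒬 ⟨((G ⧸ N) → Acar) ⋊[ρ2] (G ⧸ N)⟩ :=
      sdprod_mem 𝒩 𝒬 (G ⧸ N) (G ⧸ N) Acar hAX2 hQbar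
    have hmulF : ∀ (χ : ↥N →* Acar) (g1 g2 : G),
        (⟨fun x => χ (γ' (g1 * g2) x), π (g1 * g2)⟩ : ((G ⧸ N) → Acar) ⋊[ρ2] (G ⧸ N))
          = (⟨fun x => χ (γ' g1 x), π g1⟩ : ((G ⧸ N) → Acar) ⋊[ρ2] (G ⧸ N))
            * ⟨fun x => χ (γ' g2 x), π g2⟩ := by
      intro χ g1 g2
      rw [SemidirectProduct.mul_def]
      refine SemidirectProduct.ext ?_ (map_mul π g1 g2)
      funext x
      show χ (γ' (g1 * g2) x) = χ (γ' g1 x) * (ρ2 (π g1) (fun x => χ (γ' g2 x))) x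
      rw [hρ2, arrAct_apply]
      show χ (γ' (g1 * g2) x) = χ (γ' g1 x) * χ (γ' g2 ((π g1)⁻¹ • x))
      rw [← map_mul]
      congr 1
      apply Subtype.ext
      show γ (g1 * g2) x = (γ g1 x) * (γ g2 ((π g1)⁻¹ • x))
      rw [smul_eq_mul]
      exact hγcoc g1 g2 x
    set F : G →* ((G ⧸ N) → Acar) ⋊[ρ2] (G ⧸ N) :=
      MonoidHom.mk' (fun g0 => ⟨fun x => φ (γ' g0 x), π g0⟩) (hmulF φ) with hF
    set F' : G →* ((G ⧸ N) → Acar) ⋊[ρ2] (G ⧸ N) :=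
      MonoidHom.mk' (fun g0 => ⟨fun x => ψ (γ' g0 x), π g0⟩) (hmulF ψ) with hF'
    have hFagree : ∀ h ∈ H, F h = F' h := by
      intro h hh
      refine SemidirectProduct.ext ?_ rfl
      funext x
      show φ (γ' h x) = ψ (γ' h x)
      rw [heq]
      rw [Subgroup.mem_subgroupOf]
      exact ht_key h hh x
    have hFa := ha ⟨((G ⧸ N) → Acar) ⋊[ρ2] (G ⧸ N)⟩ hK2 F F' hFagree
    have hleft : ∀ x, φ (γ' a x) = ψ (γ' a x) := by
      intro x
      have := congrArg SemidirectProduct.left hFa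
      exact congrFun this x
    have hmemD' : γ a (π a) ∈ D' := by
      have h1 : γ' a (π a) ∈ D'.subgroupOf N := (heq _).mp (hleft (π a))
      rw [Subgroup.mem_subgroupOf] at h1
      exact h1
    have hta : γ a (π a) = (t (π a))⁻¹ * a := by
      simp only [hγ, inv_mul_cancel, ht_one, mul_one]
    have htaH : t (π a) ∈ H := ht_H (π a) hproj
    rw [hta] at hmemD'
    rw [Set.mem_mul]
    exact ⟨t (π a), htaH, (t (π a))⁻¹ * a, hmemD', by group⟩
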